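/- Let a, b, α > 0 and k > 2, let f : ℝ → ℝ satisfy f(s) = 0 for s ≤ 0, f continuous, (f1) f(s)/s³ → 0 as s → 0⁺ and (f2) s ↦ f(s)/s³ strictly increasing on (0,∞), and let a' > 0 satisfy f(a') + (a')⁵ = (α/k)·a'. Let W : ℝ³ → ℝ be measurable with W(z) ≥ α for all z. Suppose w : ℝ³ → ℝ is twice continuously differentiable, w ≥ 0, w ≢ 0, w and |∇w| are square-integrable, w(z) → 0 as |z| → ∞, and w satisfies pointwise −(a + b∫_{ℝ³}|∇w|² dz)Δw(z) + W(z)w(z) = f(w(z)) + w(z)⁵ for all z ∈ ℝ³. Then sup_{z ∈ ℝ³} w(z) ≥ a'. -/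

import Mathlib

open MeasureTheory Real Set Filter Topology Metric

noncomputable section

abbrev E3 := EuclideanSpace ℝ (Fin 3)

/-- The Laplacian of `u : ℝ³ → ℝ`, as the sum of second partial derivatives. -/
def lap (u : E3 → ℝ) (z : E3) : ℝ :=
  ∑ i : Fin 3,
    fderiv ℝ (fun y => fderiv ℝ u y (EuclideanSpace.single i (1:ℝ))) z
      (EuclideanSpace.single i (1:ℝ))

lemma aux_snd_deriv (g : ℝ → ℝ) (hg1 : Differentiable ℝ g)
    (hg2 : Differentiable ℝ (deriv g)) (hmax : ∀ t, g t ≤ g 0) :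
    deriv (deriv g) 0 ≤ 0 := by
  by_contra h
  push_neg at h
  have hlm : IsLocalMax g 0 := Filter.Eventually.of_forall hmax
  have hd0 : deriv g 0 = 0 := hlm.deriv_eq_zero
  have hslope := (hg2 (0:ℝ)).hasDerivAt
  rw [hasDerivAt_iff_tendsto_slope] at hslope
  have hpos' : ∀ᶠ t in 𝓝[≠] (0:ℝ), 0 < slope (deriv g) 0 t :=
    hslope.eventually (eventually_gt_nhds h)
  have hpos : ∀ᶠ t in 𝓝[>] (0:ℝ), 0 < slope (deriv g) 0 t :=
    hpos'.filter_mono (nhdsWithin_mono _ (fun x hx => ne_of_gt hx))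
  obtain ⟨u, hu, huδ⟩ := mem_nhdsGT_iff_exists_Ioo_subset.mp hpos
  have hu0 : (0:ℝ) < u := hu
  have hgpos : ∀ t ∈ Ioo (0:ℝ) u, 0 < deriv g t := by
    intro t ht
    have h2 := huδ ht
    simp only [mem_setOf_eq, slope_def_field, hd0, sub_zero] at h2
    have := div_pos_iff.mp h2
    rcases this with ⟨h3, _⟩ | ⟨_, h4⟩
    · exact h3
    · linarith [ht.1]
  have hmono : StrictMonoOn g (Icc 0 u) :=
    strictMonoOn_of_deriv_pos (convex_Icc _ _) hg1.continuous.continuousOn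
      (by intro t ht; rw [interior_Icc] at ht; exact hgpos t ht)
  have := hmono (left_mem_Icc.mpr hu0.le) (right_mem_Icc.mpr hu0.le) hu0
  linarith [hmax u]

theorem sup_of_solution_at_least_aprime
    (a b α k : ℝ) (ha : 0 < a) (hb : 0 < b) (hα : 0 < α) (hk : 2 < k)
    (f : ℝ → ℝ) (hf0 : ∀ s ≤ (0:ℝ), f s = 0) (hfc : Continuous f)
    (hf1 : Tendsto (fun s => f s / s ^ 3) (𝓝[>] 0) (𝓝 0))
    (hf2 : StrictMonoOn (fun s => f s / s ^ 3) (Ioi 0))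
    (a' : ℝ) (ha' : 0 < a') (heq : f a' + a' ^ 5 = α / k * a')
    (W : E3 → ℝ) (hWmeas : Measurable W) (hWα : ∀ z, α ≤ W z)
    (w : E3 → ℝ) (hwC2 : ContDiff ℝ 2 w) (hwnn : ∀ z, 0 ≤ w z) (hwne : w ≠ 0)
    (hw2 : Integrable (fun z : E3 => (w z) ^ 2))
    (hwg2 : Integrable (fun z : E3 => ‖gradient w z‖ ^ 2))
    (hwdecay : Tendsto w (Filter.cocompact E3) (𝓝 0))
    (hweq : ∀ z : E3,
      -((a + b * ∫ y : E3, ‖gradient w y‖ ^ 2) * lap w z) + W z * w z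
        = f (w z) + (w z) ^ 5) :
    a' ≤ ⨆ z : E3, w z := by
  -- there is a point where w is positive
  obtain ⟨z₁, hz₁⟩ : ∃ z, 0 < w z := by
    by_contra hc
    push_neg at hc
    exact hwne (funext fun z => le_antisymm (hc z) (hwnn z))
  -- existence of a global maximum
  have hev : ∀ᶠ z in Filter.cocompact E3, w z < w z₁ :=
    hwdecay.eventually (eventually_lt_nhds hz₁)
  obtain ⟨K, hKc, hK⟩ := (Filter.hasBasis_cocompact.eventually_iff).mp hev
  have hK'c : IsCompact (K ∪ {z₁}) := hKc.union isCompact_singleton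
  obtain ⟨z₀, hz₀mem, hz₀max⟩ :=
    hK'c.exists_isMaxOn ⟨z₁, Or.inr rfl⟩ hwC2.continuous.continuousOn
  have hglob : ∀ y, w y ≤ w z₀ := by
    intro y
    by_cases hy : y ∈ K
    · exact hz₀max (Or.inl hy)
    · exact le_trans (hK hy).le (hz₀max (Or.inr rfl))
  have hz₀pos : 0 < w z₀ := lt_of_lt_of_le hz₁ (hz₀max (Or.inr rfl))
  have hbdd : BddAbove (Set.range w) := ⟨w z₀, by rintro _ ⟨y, rfl⟩; exact hglob y⟩
  suffices hkey : a' ≤ w z₀ from le_trans hkey (le_ciSup hbdd z₀)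
  by_contra hlt
  push_neg at hlt
  set s := w z₀ with hs
  -- key nonlinear inequality: f s + s^5 < α * s
  have hsIoi : s ∈ Ioi (0:ℝ) := hz₀pos
  have ha'Ioi : a' ∈ Ioi (0:ℝ) := ha'
  have hpq : f s / s ^ 3 < f a' / a' ^ 3 := hf2 hsIoi ha'Ioi hlt
  have hp0 : 0 ≤ f s / s ^ 3 := by
    have hev2 : ∀ᶠ t in 𝓝[>] (0:ℝ), f t / t ^ 3 ≤ f s / s ^ 3 := by
      filter_upwards [Ioo_mem_nhdsGT_of_mem (Set.mem_Ico.mpr ⟨le_rfl, hz₀pos⟩)] with t ht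
      exact (hf2 ht.1 hsIoi ht.2).le
    exact le_of_tendsto hf1 hev2
  have hfs : f s = (f s / s ^ 3) * s ^ 3 := by field_simp
  have hfa : f a' = (f a' / a' ^ 3) * a' ^ 3 := by field_simp
  have hineq : f s + s ^ 5 < α * s := by
    have hq0 : 0 < f a' / a' ^ 3 := lt_of_le_of_lt hp0 hpq
    have hs2 : s ^ 2 ≤ a' ^ 2 := by nlinarith
    have h1 : s ^ 3 ≤ s * a' ^ 2 := by
      calc s ^ 3 = s * s ^ 2 := by ring
        _ ≤ s * a' ^ 2 := mul_le_mul_of_nonneg_left hs2 hz₀pos.le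
    have h2 : (f s / s ^ 3) * s ^ 3 ≤ (f s / s ^ 3) * (s * a' ^ 2) :=
      mul_le_mul_of_nonneg_left h1 hp0
    have h3 : (f s / s ^ 3) * (s * a' ^ 2) < (f a' / a' ^ 3) * (s * a' ^ 2) :=
      mul_lt_mul_of_pos_right hpq (by positivity)
    have hs4 : s ^ 4 < a' ^ 4 := by
      have := pow_lt_pow_left₀ hlt hz₀pos.le (n := 4) (by norm_num)
      exact this
    have h4 : s ^ 5 < s * a' ^ 4 := by
      calc s ^ 5 = s * s ^ 4 := by ring
        _ < s * a' ^ 4 := by exact mul_lt_mul_of_pos_left hs4 hz₀pos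
    have h5 : (f a' / a' ^ 3) * (s * a' ^ 2) + s * a' ^ 4
        = (s / a') * ((f a' / a' ^ 3) * a' ^ 3 + a' ^ 5) := by
      field_simp
    have h6 : (f a' / a' ^ 3) * a' ^ 3 + a' ^ 5 = α / k * a' := by rw [← hfa]; exact heq
    have h7 : (s / a') * (α / k * a') = α / k * s := by field_simp
    have h8 : α / k * s < α * s := by
      have : α / k < α := div_lt_self hα (by linarith)
      exact mul_lt_mul_of_pos_right this hz₀pos
    calc f s + s ^ 5 = (f s / s ^ 3) * s ^ 3 + s ^ 5 := by rw [← hfs]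
      _ ≤ (f s / s ^ 3) * (s * a' ^ 2) + s ^ 5 := by linarith
      _ < (f a' / a' ^ 3) * (s * a' ^ 2) + s * a' ^ 4 := by linarith
      _ = (s / a') * ((f a' / a' ^ 3) * a' ^ 3 + a' ^ 5) := h5
      _ = α / k * s := by rw [h6, h7]
      _ < α * s := h8
  -- from the equation: lap w z₀ > 0
  have hA : 0 < a + b * ∫ y : E3, ‖gradient w y‖ ^ 2 := by
    have : 0 ≤ ∫ y : E3, ‖gradient w y‖ ^ 2 := integral_nonneg (fun y => by positivity)
    nlinarith
  have hlap_pos : 0 < lap w z₀ := by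
    have h9 := hweq z₀
    have h10 : α * s ≤ W z₀ * s := mul_le_mul_of_nonneg_right (hWα z₀) hz₀pos.le
    rw [← hs] at h9
    nlinarith
  -- but lap w z₀ ≤ 0 at the maximum
  have hlap_nonpos : lap w z₀ ≤ 0 := by
    apply Finset.sum_nonpos
    intro i _
    set v : E3 := EuclideanSpace.single i (1:ℝ) with hv
    have hL : ∀ t : ℝ, HasDerivAt (fun t : ℝ => z₀ + t • v) v t := by
      intro t
      simpa using ((hasDerivAt_id t).smul_const v).const_add z₀
    have hwdiff : Differentiable ℝ w := hwC2.differentiable (by norm_num)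
    set g : ℝ → ℝ := fun t => w (z₀ + t • v) with hg
    have hg' : ∀ t, HasDerivAt g (fderiv ℝ w (z₀ + t • v) v) t := fun t =>
      (hwdiff (z₀ + t • v)).hasFDerivAt.comp_hasDerivAt t (hL t)
    have hderivg : deriv g = fun t => fderiv ℝ w (z₀ + t • v) v :=
      funext fun t => (hg' t).deriv
    have hF : ContDiff ℝ 1 (fun y => fderiv ℝ w y v) :=
      (hwC2.fderiv_right (by norm_num)).clm_apply contDiff_const
    have hG : ∀ t : ℝ, HasDerivAt (fun t : ℝ => fderiv ℝ w (z₀ + t • v) v)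
        (fderiv ℝ (fun y => fderiv ℝ w y v) (z₀ + t • v) v) t := fun t =>
      by have h := ((hF.differentiable one_ne_zero) (z₀ + t • v)).hasFDerivAt.comp_hasDerivAt t (hL t); exact h
    have hdd : deriv (deriv g) 0 = fderiv ℝ (fun y => fderiv ℝ w y v) z₀ v := by
      rw [hderivg]
      have := (hG 0).deriv
      simpa using this
    rw [← hdd]
    apply aux_snd_deriv
    · exact fun t => (hg' t).differentiableAt
    · rw [hderivg]; exact fun t => (hG t).differentiableAt
    · intro t
      have : g 0 = w z₀ := by simp [hg]
      rw [this]
      exact hglob _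
  linarith
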